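/- Conversely, if V : ℝ × ℝ → ℂ satisfies the complex Burgers equation ∂t V + V ∂x V - (i/2) ∂xx V = 0 and V = -i (∂x F)/F for a smooth nowhere-zero F : ℝ × ℝ → ℂ, then ∂x [ (1/F)( i ∂t F + (1/2) ∂xx F ) ] = 0, i.e. F solves the free Schrödinger equation up to a function of time only. -/

import Mathlib

noncomputable def Dvec (v : ℝ × ℝ) (f : ℝ × ℝ → ℂ) (p : ℝ × ℝ) : ℂ := fderiv ℝ f p v

lemma pxC_eq_Dvec {f : ℝ × ℝ → ℂ} {p : ℝ × ℝ} (hf : DifferentiableAt ℝ f p) :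
    deriv (fun y => f (p.1, y)) p.2 = Dvec ((0:ℝ), (1:ℝ)) f p := by
  have h1 : HasDerivAt (fun y : ℝ => ((p.1 : ℝ), y)) (((0:ℝ), (1:ℝ)) : ℝ × ℝ) p.2 :=
    (hasDerivAt_const _ _).prodMk (hasDerivAt_id _)
  exact (hf.hasFDerivAt.comp_hasDerivAt p.2 h1).deriv

lemma ptC_eq_Dvec {f : ℝ × ℝ → ℂ} {p : ℝ × ℝ} (hf : DifferentiableAt ℝ f p) :
    deriv (fun s => f (s, p.2)) p.1 = Dvec ((1:ℝ), (0:ℝ)) f p := by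
  have h1 : HasDerivAt (fun s : ℝ => ((s : ℝ), p.2)) (((1:ℝ), (0:ℝ)) : ℝ × ℝ) p.1 :=
    (hasDerivAt_id _).prodMk (hasDerivAt_const _ _)
  exact (hf.hasFDerivAt.comp_hasDerivAt p.1 h1).deriv

lemma contDiff_Dvec {f : ℝ × ℝ → ℂ} {n m : WithTop ℕ∞} (v : ℝ × ℝ) (hf : ContDiff ℝ n f)
    (h : m + 1 ≤ n) : ContDiff ℝ m (Dvec v f) :=
  (ContinuousLinearMap.apply ℝ ℂ v).contDiff.comp (hf.fderiv_right h)

lemma Dvec_mul (v : ℝ × ℝ) {g h : ℝ × ℝ → ℂ} {p : ℝ × ℝ}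
    (hg : DifferentiableAt ℝ g p) (hh : DifferentiableAt ℝ h p) :
    Dvec v (fun q => g q * h q) p = Dvec v g p * h p + g p * Dvec v h p := by
  simp only [Dvec, fderiv_fun_mul hg hh, ContinuousLinearMap.add_apply,
    ContinuousLinearMap.smul_apply, smul_eq_mul]
  ring

lemma Dvec_const_mul (v : ℝ × ℝ) (a : ℂ) {g : ℝ × ℝ → ℂ} {p : ℝ × ℝ}
    (hg : DifferentiableAt ℝ g p) :
    Dvec v (fun q => a * g q) p = a * Dvec v g p := by
  simp only [Dvec, fderiv_const_mul hg, ContinuousLinearMap.smul_apply, smul_eq_mul]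

lemma Dvec_add (v : ℝ × ℝ) {g h : ℝ × ℝ → ℂ} {p : ℝ × ℝ}
    (hg : DifferentiableAt ℝ g p) (hh : DifferentiableAt ℝ h p) :
    Dvec v (fun q => g q + h q) p = Dvec v g p + Dvec v h p := by
  simp only [Dvec, fderiv_fun_add hg hh, ContinuousLinearMap.add_apply]

lemma Dvec_comm {f : ℝ × ℝ → ℂ} (hf : ContDiff ℝ 4 f) (p v w : ℝ × ℝ) :
    Dvec w (Dvec v f) p = Dvec v (Dvec w f) p := by
  have hd : ∀ q, HasFDerivAt f (fderiv ℝ f q) q := fun q =>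
    ((hf.differentiable (by norm_num)) q).hasFDerivAt
  have h2 : DifferentiableAt ℝ (fderiv ℝ f) p :=
    ((hf.fderiv_right (by norm_num : (1:WithTop ℕ∞) + 1 ≤ 4)).differentiable one_ne_zero) p
  have key : ∀ v w : ℝ × ℝ, Dvec w (Dvec v f) p = fderiv ℝ (fderiv ℝ f) p w v := by
    intro v w
    have h3 := ((ContinuousLinearMap.apply ℝ ℂ v).hasFDerivAt.comp p h2.hasFDerivAt).fderiv
    calc Dvec w (Dvec v f) p
        = fderiv ℝ ((ContinuousLinearMap.apply ℝ ℂ v) ∘ (fderiv ℝ f)) p w := rfl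
      _ = ((ContinuousLinearMap.apply ℝ ℂ v).comp (fderiv ℝ (fderiv ℝ f) p)) w := by rw [h3]
      _ = fderiv ℝ (fderiv ℝ f) p w v := rfl
  rw [key, key]
  exact second_derivative_symmetric hd h2.hasFDerivAt _ _

/-- Partial derivative in the time (first) variable, for complex-valued `f`. -/
noncomputable def ptC (f : ℝ × ℝ → ℂ) (p : ℝ × ℝ) : ℂ :=
  deriv (fun s => f (s, p.2)) p.1

/-- Partial derivative in the space (second) variable, for complex-valued `f`. -/
noncomputable def pxC (f : ℝ × ℝ → ℂ) (p : ℝ × ℝ) : ℂ :=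
  deriv (fun y => f (p.1, y)) p.2

theorem schrodinger_up_to_time_function_of_complex_burgers
    (F : ℝ × ℝ → ℂ) (hF : ContDiff ℝ 4 F) (hne : ∀ p, F p ≠ 0)
    (V : ℝ × ℝ → ℂ) (hV : ∀ p, V p = -Complex.I * pxC F p / F p)
    (burgers : ∀ p, ptC V p + V p * pxC V p - (Complex.I/2) * pxC (pxC V) p = 0) :
    ∀ p, pxC (fun q => (1 / F q) * (Complex.I * ptC F q + (1/2) * pxC (pxC F) q)) p = 0 := by
  intro p
  set ex : ℝ × ℝ := ((0:ℝ), (1:ℝ)) with hex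
  set et : ℝ × ℝ := ((1:ℝ), (0:ℝ)) with het
  set I := Complex.I with hI
  -- differentiability facts
  have hFd : Differentiable ℝ F := hF.differentiable (by norm_num)
  have hFx : ContDiff ℝ 3 (Dvec ex F) := contDiff_Dvec ex hF (by norm_num)
  have hFt : ContDiff ℝ 3 (Dvec et F) := contDiff_Dvec et hF (by norm_num)
  have hFxx : ContDiff ℝ 2 (Dvec ex (Dvec ex F)) := contDiff_Dvec ex hFx (by norm_num)
  have hFtx : ContDiff ℝ 2 (Dvec ex (Dvec et F)) := contDiff_Dvec ex hFt (by norm_num)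
  have hFxxx : ContDiff ℝ 1 (Dvec ex (Dvec ex (Dvec ex F))) :=
    contDiff_Dvec ex hFxx (by norm_num)
  have hFxd : Differentiable ℝ (Dvec ex F) := hFx.differentiable (by norm_num)
  have hFtd : Differentiable ℝ (Dvec et F) := hFt.differentiable (by norm_num)
  have hFxxd : Differentiable ℝ (Dvec ex (Dvec ex F)) := hFxx.differentiable (by norm_num)
  -- pxC F = Dvec ex F, etc.
  have hpxF : pxC F = Dvec ex F := funext fun q => pxC_eq_Dvec (hFd q)
  -- V as a function
  have hVfun : V = fun q => -I * Dvec ex F q / F q := by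
    funext q; rw [hV q, hpxF]
  have hVc : ContDiff ℝ 3 V := by
    rw [hVfun]
    have h1 : ContDiff ℝ 3 fun q => -I * Dvec ex F q := contDiff_const.mul hFx
    have h2 : ContDiff ℝ 3 F := hF.of_le (show (3:WithTop ℕ∞) ≤ 4 by norm_num)
    simp only [div_eq_mul_inv]
    exact h1.mul (h2.inv hne)
  have hVd : Differentiable ℝ V := hVc.differentiable (by norm_num)
  have hVx : ContDiff ℝ 2 (Dvec ex V) := contDiff_Dvec ex hVc (by norm_num)
  have hVxd : Differentiable ℝ (Dvec ex V) := hVx.differentiable (by norm_num)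
  -- key functional identity  V * F = -I * ∂x F
  have hVF : ∀ q, V q * F q = -I * Dvec ex F q := by
    intro q
    rw [hVfun]
    exact div_mul_cancel₀ _ (hne q)
  have hfe : (fun r => V r * F r) = (fun r => -I * Dvec ex F r) := funext hVF
  -- differentiate it in x :
  have hR2 : ∀ q, Dvec ex V q * F q + V q * Dvec ex F q = -I * Dvec ex (Dvec ex F) q := by
    intro q
    calc Dvec ex V q * F q + V q * Dvec ex F q
        = Dvec ex (fun r => V r * F r) q := (Dvec_mul ex (hVd q) (hFd q)).symm
      _ = Dvec ex (fun r => -I * Dvec ex F r) q := by rw [hfe]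
      _ = -I * Dvec ex (Dvec ex F) q := Dvec_const_mul ex _ (hFxd q)
  -- differentiate it in t :
  have hR3 : Dvec et V p * F p + V p * Dvec et F p = -I * Dvec et (Dvec ex F) p := by
    calc Dvec et V p * F p + V p * Dvec et F p
        = Dvec et (fun r => V r * F r) p := (Dvec_mul et (hVd p) (hFd p)).symm
      _ = Dvec et (fun r => -I * Dvec ex F r) p := by rw [hfe]
      _ = -I * Dvec et (Dvec ex F) p := Dvec_const_mul et _ (hFxd p)
  -- differentiate hR2 in x :
  have hfe2 : (fun r => Dvec ex V r * F r + V r * Dvec ex F r)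
      = (fun r => -I * Dvec ex (Dvec ex F) r) := funext hR2
  have hR4 : (Dvec ex (Dvec ex V) p * F p + Dvec ex V p * Dvec ex F p)
      + (Dvec ex V p * Dvec ex F p + V p * Dvec ex (Dvec ex F) p)
      = -I * Dvec ex (Dvec ex (Dvec ex F)) p := by
    calc (Dvec ex (Dvec ex V) p * F p + Dvec ex V p * Dvec ex F p)
          + (Dvec ex V p * Dvec ex F p + V p * Dvec ex (Dvec ex F) p)
        = Dvec ex (fun r => Dvec ex V r * F r) p
          + Dvec ex (fun r => V r * Dvec ex F r) p := by
          rw [Dvec_mul ex (hVxd p) (hFd p), Dvec_mul ex (hVd p) (hFxd p)]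
      _ = Dvec ex (fun r => Dvec ex V r * F r + V r * Dvec ex F r) p :=
          (Dvec_add ex ((hVxd p).mul (hFd p)) ((hVd p).mul (hFxd p))).symm
      _ = Dvec ex (fun r => -I * Dvec ex (Dvec ex F) r) p := by rw [hfe2]
      _ = -I * Dvec ex (Dvec ex (Dvec ex F)) p := Dvec_const_mul ex _ (hFxxd p)
  -- rewrite Burgers at p
  have hptV : ptC V p = Dvec et V p := ptC_eq_Dvec (hVd p)
  have hpxV : pxC V = Dvec ex V := funext fun q => pxC_eq_Dvec (hVd q)
  have hpxxV : pxC (pxC V) p = Dvec ex (Dvec ex V) p := by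
    rw [hpxV]; exact pxC_eq_Dvec (hVxd p)
  have hB := burgers p
  rw [hptV, hpxxV, hpxV] at hB
  -- rewrite the goal
  have hptF : ∀ q, ptC F q = Dvec et F q := fun q => ptC_eq_Dvec (hFd q)
  have hpxxF : ∀ q, pxC (pxC F) q = Dvec ex (Dvec ex F) q := by
    intro q; rw [hpxF]; exact pxC_eq_Dvec (hFxd q)
  have hGfun : (fun q => (1 / F q) * (I * ptC F q + (1/2) * pxC (pxC F) q))
      = (fun q => (I * Dvec et F q + (1/2) * Dvec ex (Dvec ex F) q) / F q) := by
    funext q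
    rw [hptF q, hpxxF q]
    ring
  rw [hGfun]
  set G : ℝ × ℝ → ℂ := fun q => (I * Dvec et F q + (1/2) * Dvec ex (Dvec ex F) q) / F q
    with hGdef
  have hGc : ContDiff ℝ 1 G := by
    have h1 : ContDiff ℝ 1 fun q => I * Dvec et F q :=
      contDiff_const.mul (hFt.of_le (show (1:WithTop ℕ∞) ≤ 3 by norm_num))
    have h2 : ContDiff ℝ 1 fun q => (1:ℂ)/2 * Dvec ex (Dvec ex F) q :=
      contDiff_const.mul (hFxx.of_le (show (1:WithTop ℕ∞) ≤ 2 by norm_num))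
    have h3 : ContDiff ℝ 1 F := hF.of_le (show (1:WithTop ℕ∞) ≤ 4 by norm_num)
    have h4 : G = fun q => (I * Dvec et F q + (1:ℂ)/2 * Dvec ex (Dvec ex F) q) * (F q)⁻¹ := by
      rw [hGdef]; funext q; rw [div_eq_mul_inv]
    rw [h4]
    exact (h1.add h2).mul (h3.inv hne)
  have hGd : Differentiable ℝ G := hGc.differentiable one_ne_zero
  have hGoal : pxC G p = Dvec ex G p := pxC_eq_Dvec (hGd p)
  rw [hGoal]
  -- G * F identity and its x-derivative
  have hGF : ∀ q, G q * F q = I * Dvec et F q + (1/2) * Dvec ex (Dvec ex F) q := by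
    intro q
    rw [hGdef]
    exact div_mul_cancel₀ _ (hne q)
  have hfe3 : (fun r => G r * F r)
      = (fun r => I * Dvec et F r + (1/2) * Dvec ex (Dvec ex F) r) := funext hGF
  have hR6 : Dvec ex G p * F p + G p * Dvec ex F p
      = I * Dvec ex (Dvec et F) p + (1/2) * Dvec ex (Dvec ex (Dvec ex F)) p := by
    calc Dvec ex G p * F p + G p * Dvec ex F p
        = Dvec ex (fun r => G r * F r) p := (Dvec_mul ex (hGd p) (hFd p)).symm
      _ = Dvec ex (fun r => I * Dvec et F r + (1/2) * Dvec ex (Dvec ex F) r) p := by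
          rw [hfe3]
      _ = Dvec ex (fun r => I * Dvec et F r) p
          + Dvec ex (fun r => (1/2) * Dvec ex (Dvec ex F) r) p :=
          Dvec_add ex ((differentiable_const I).mul hFtd p)
            ((differentiable_const ((1:ℂ)/2)).mul hFxxd p)
      _ = I * Dvec ex (Dvec et F) p + (1/2) * Dvec ex (Dvec ex (Dvec ex F)) p := by
          rw [Dvec_const_mul ex _ (hFtd p), Dvec_const_mul ex _ (hFxxd p)]
  have hR7 : G p * F p = I * Dvec et F p + (1/2) * Dvec ex (Dvec ex F) p := hGF p
  -- Clairaut
  have hcomm : Dvec ex (Dvec et F) p = Dvec et (Dvec ex F) p := Dvec_comm hF p et ex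
  rw [hcomm] at hR6
  -- final algebra
  have hR1 := hVF p
  have hR2p := hR2 p
  have hIsq : I ^ 2 = -1 := Complex.I_sq
  have hx3 : Dvec ex G p * (F p) ^ 3 = 0 := by
    linear_combination (-(F p * Dvec et F p) - F p * Dvec ex F p * V p
        - I/2 * F p * Dvec ex (Dvec ex F) p) * hR1
      + ((F p)^2 * V p + I * F p * Dvec ex F p) * hR2p
      + (F p)^2 * hR3
      - I/2 * (F p)^2 * hR4
      - (F p)^3 * hB
      + (F p)^2 * hR6
      - F p * Dvec ex F p * hR7
      + ((F p)^2 * Dvec ex (Dvec ex (Dvec ex F)) p / 2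
        - F p * Dvec ex F p * Dvec ex (Dvec ex F) p / 2) * hIsq
  have h3 : (F p) ^ 3 ≠ 0 := pow_ne_zero 3 (hne p)
  exact (mul_eq_zero.mp hx3).resolve_right h3
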